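/- Let f : {0,1}ⁿ → F₂ be a polynomial whose degree ≤ 2 part is uniformly random. Then Pr[ngap(f)² ≥ 2^{-n-1}] ≥ 1/12. -/

import Mathlib

open Finset

/-! ### Auxiliary definitions -/

abbrev Vn (n : ℕ) := Fin n → ZMod 2
abbrev PBn (n : ℕ) := {p : Fin n × Fin n // p.1 < p.2}
abbrev PTn (n : ℕ) := {t : Fin n × Fin n × Fin n // t.1 < t.2.1 ∧ t.2.1 < t.2.2}
abbrev Omn (n : ℕ) := (PBn n → ZMod 2) × Vn n

noncomputable def chi (a : ZMod 2) : ℝ := if a = 0 then 1 else -1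

lemma zmod2_cases (a : ZMod 2) : a = 0 ∨ a = 1 := by revert a; decide

lemma chi_zero : chi 0 = 1 := by simp [chi]

lemma chi_add (a b : ZMod 2) : chi (a + b) = chi a * chi b := by
  rcases zmod2_cases a with h | h <;> rcases zmod2_cases b with h' | h' <;>
    subst h <;> subst h' <;> simp [chi, show (1:ZMod 2)+1 = 0 from by decide]

lemma chi_le_one (a : ZMod 2) : chi a ≤ 1 := by
  rcases zmod2_cases a with h | h <;> subst h <;> norm_num [chi]

lemma chi_sum {ι : Type*} (s : Finset ι) (g : ι → ZMod 2) :
    chi (∑ i ∈ s, g i) = ∏ i ∈ s, chi (g i) := by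
  classical
  induction s using Finset.induction with
  | empty => simp [chi_zero]
  | insert a s h ih => simp [Finset.sum_insert h, Finset.prod_insert h, chi_add, ih]

lemma sum_chi_mul (c : ZMod 2) : (∑ v : ZMod 2, chi (v * c)) = if c = 0 then 2 else 0 := by
  have : (univ : Finset (ZMod 2)) = {0, 1} := by decide
  rw [this, Finset.sum_insert (by decide), Finset.sum_singleton]
  rcases zmod2_cases c with h | h <;> subst h <;> norm_num [chi]

lemma orth {ι : Type*} [Fintype ι] [DecidableEq ι] (L : ι → ZMod 2) :
    (∑ b : ι → ZMod 2, chi (∑ i, b i * L i))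
      = if ∀ i, L i = 0 then (2 : ℝ) ^ (Fintype.card ι) else 0 := by
  classical
  have h1 : (∑ b : ι → ZMod 2, chi (∑ i, b i * L i))
      = ∑ b : ι → ZMod 2, ∏ i, chi (b i * L i) := by
    refine Finset.sum_congr rfl fun b _ => ?_
    exact chi_sum univ _
  have h2 := (Finset.prod_univ_sum (fun _ : ι => (univ : Finset (ZMod 2)))
    (fun i v => chi (v * L i)))
  rw [Fintype.piFinset_univ] at h2
  rw [h1, ← h2]
  by_cases h : ∀ i, L i = 0
  · simp only [if_pos h]
    have : ∀ i : ι, (∑ v : ZMod 2, chi (v * L i)) = 2 := by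
      intro i; rw [sum_chi_mul, if_pos (h i)]
    rw [Finset.prod_congr rfl fun i _ => this i]
    rw [Finset.prod_const, Finset.card_univ]
  · simp only [if_neg h]
    push_neg at h
    obtain ⟨i, hi⟩ := h
    apply Finset.prod_eq_zero (Finset.mem_univ i)
    rw [sum_chi_mul, if_neg hi]

lemma card_Omn (n : ℕ) :
    (Fintype.card (Omn n) : ℝ) = 2 ^ (Fintype.card (PBn n)) * 2 ^ n := by
  simp [Fintype.card_prod, Fintype.card_fun, ZMod.card]

/-- Character sum over the random quadratic/linear coefficients. -/
lemma charsum (n : ℕ) (c : ZMod 2) (LB : PBn n → ZMod 2) (LG : Fin n → ZMod 2) :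
    (∑ bg : Omn n, chi (c + (∑ p, bg.1 p * LB p) + (∑ i, bg.2 i * LG i)))
      = if (∀ p, LB p = 0) ∧ (∀ i, LG i = 0)
          then chi c * (Fintype.card (Omn n) : ℝ) else 0 := by
  classical
  rw [Fintype.sum_prod_type]
  have key : ∀ (b : PBn n → ZMod 2) (g : Vn n),
      chi (c + (∑ p, b p * LB p) + (∑ i, g i * LG i))
        = chi c * chi (∑ p, b p * LB p) * chi (∑ i, g i * LG i) := by
    intro b g; rw [chi_add, chi_add]
  simp only [key]
  have : (∑ b : PBn n → ZMod 2, ∑ g : Vn n,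
        chi c * chi (∑ p, b p * LB p) * chi (∑ i, g i * LG i))
      = chi c * (∑ b : PBn n → ZMod 2, chi (∑ p, b p * LB p))
          * (∑ g : Vn n, chi (∑ i, g i * LG i)) := by
    calc (∑ b : PBn n → ZMod 2, ∑ g : Vn n,
            chi c * chi (∑ p, b p * LB p) * chi (∑ i, g i * LG i))
        = ∑ b : PBn n → ZMod 2,
            (chi c * chi (∑ p, b p * LB p)) * (∑ g : Vn n, chi (∑ i, g i * LG i)) :=
          Finset.sum_congr rfl fun b _ => (Finset.mul_sum _ _ _).symm
      _ = (∑ b : PBn n → ZMod 2, chi c * chi (∑ p, b p * LB p))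
            * (∑ g : Vn n, chi (∑ i, g i * LG i)) := (Finset.sum_mul _ _ _).symm
      _ = chi c * (∑ b : PBn n → ZMod 2, chi (∑ p, b p * LB p))
            * (∑ g : Vn n, chi (∑ i, g i * LG i)) := by rw [← Finset.mul_sum]
  rw [this, orth, orth, card_Omn]
  by_cases hB : ∀ p, LB p = 0
  · by_cases hG : ∀ i, LG i = 0
    · rw [if_pos hB, if_pos hG, if_pos ⟨hB, hG⟩, Fintype.card_fin]; ring
    · rw [if_neg hG, if_neg (show ¬((∀ p, LB p = 0) ∧ ∀ i, LG i = 0) from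
        fun h => hG h.2)]
      ring
  · rw [if_neg hB, if_neg (show ¬((∀ p, LB p = 0) ∧ ∀ i, LG i = 0) from
      fun h => hB h.1)]
    ring

def cub (n : ℕ) (α : PTn n → ZMod 2) (x : Vn n) : ZMod 2 :=
  ∑ t : PTn n, α t * x t.1.1 * x t.1.2.1 * x t.1.2.2

def Qc (n : ℕ) (x : Vn n) (p : PBn n) : ZMod 2 := x p.1.1 * x p.1.2

def Fn (n : ℕ) (α : PTn n → ZMod 2) (bg : Omn n) (x : Vn n) : ZMod 2 :=
  (∑ t : PTn n, α t * x t.1.1 * x t.1.2.1 * x t.1.2.2)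
  + (∑ p : PBn n, bg.1 p * x p.1.1 * x p.1.2)
  + (∑ i : Fin n, bg.2 i * x i)

lemma Fn_eq (n : ℕ) (α : PTn n → ZMod 2) (bg : Omn n) (x : Vn n) :
    Fn n α bg x = cub n α x + (∑ p, bg.1 p * Qc n x p) + (∑ i, bg.2 i * x i) := by
  unfold Fn cub Qc
  congr 2
  exact Finset.sum_congr rfl fun p _ => (mul_assoc _ _ _)

lemma F_sum2 (n : ℕ) (α : PTn n → ZMod 2) (bg : Omn n) (x y : Vn n) :
    Fn n α bg x + Fn n α bg y
      = (cub n α x + cub n α y)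
        + (∑ p, bg.1 p * (Qc n x p + Qc n y p))
        + (∑ i, bg.2 i * (x i + y i)) := by
  rw [Fn_eq, Fn_eq]
  simp only [mul_add, Finset.sum_add_distrib]
  ring

lemma F_sum4 (n : ℕ) (α : PTn n → ZMod 2) (bg : Omn n) (x y z w : Vn n) :
    Fn n α bg x + Fn n α bg y + (Fn n α bg z + Fn n α bg w)
      = (cub n α x + cub n α y + (cub n α z + cub n α w))
        + (∑ p, bg.1 p * (Qc n x p + Qc n y p + (Qc n z p + Qc n w p)))
        + (∑ i, bg.2 i * (x i + y i + (z i + w i))) := by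
  rw [Fn_eq, Fn_eq, Fn_eq, Fn_eq]
  simp only [mul_add, Finset.sum_add_distrib]
  ring

noncomputable def Sf (n : ℕ) (α : PTn n → ZMod 2) (bg : Omn n) : ℝ :=
  ∑ x : Vn n, chi (Fn n α bg x)

lemma zh_add_self (a : ZMod 2) : a + a = 0 := by revert a; decide
lemma zh_eq_of_add_zero (a b : ZMod 2) : a + b = 0 → a = b := by revert a b; decide

/-- Second moment. -/
lemma moment2 (n : ℕ) (α : PTn n → ZMod 2) :
    (∑ bg : Omn n, (Sf n α bg) ^ 2) = 2 ^ n * (Fintype.card (Omn n) : ℝ) := by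
  classical
  have hS2 : ∀ bg : Omn n, (Sf n α bg) ^ 2
      = ∑ q : Vn n × Vn n, chi (Fn n α bg q.1 + Fn n α bg q.2) := by
    intro bg
    rw [sq, Sf, Finset.sum_mul_sum, Fintype.sum_prod_type]
    exact Finset.sum_congr rfl fun x _ =>
      Finset.sum_congr rfl fun y _ => (chi_add _ _).symm
  simp only [hS2]
  rw [Finset.sum_comm]
  have inner : ∀ q : Vn n × Vn n,
      (∑ bg : Omn n, chi (Fn n α bg q.1 + Fn n α bg q.2))
        = if q.1 = q.2 then (Fintype.card (Omn n) : ℝ) else 0 := by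
    rintro ⟨x, y⟩
    have : (∑ bg : Omn n, chi (Fn n α bg x + Fn n α bg y))
        = ∑ bg : Omn n, chi ((cub n α x + cub n α y)
            + (∑ p, bg.1 p * (Qc n x p + Qc n y p))
            + (∑ i, bg.2 i * (x i + y i))) :=
      Finset.sum_congr rfl fun bg _ => by rw [F_sum2]
    rw [this, charsum]
    by_cases hxy : x = y
    · subst hxy
      rw [if_pos rfl, if_pos ⟨fun p => zh_add_self _, fun i => zh_add_self _⟩,
        zh_add_self, chi_zero, one_mul]
    · rw [if_neg hxy, if_neg]
      rintro ⟨-, hG⟩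
      exact hxy (funext fun i => zh_eq_of_add_zero _ _ (hG i))
  rw [Finset.sum_congr rfl fun q _ => inner q, Fintype.sum_prod_type]
  rw [Finset.sum_congr rfl fun x (_ : x ∈ univ) =>
    (Finset.sum_ite_eq (univ : Finset (Vn n)) x
      (fun _ => (Fintype.card (Omn n) : ℝ))).trans (if_pos (mem_univ x))]
  rw [Finset.sum_const, Finset.card_univ]
  simp [Fintype.card_fun, ZMod.card, mul_comm]

lemma zh_w (a b c d : ZMod 2) (h : a + b + (c + d) = 0) : d = a + b + c := by
  revert a b c d; decide

lemma zh_quad (xi xj yi yj zi zj : ZMod 2)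
    (h : xi*xj + yi*yj + (zi*zj + (xi+yi+zi)*(xj+yj+zj)) = 0) :
    (xi+yi)*(xj+zj) = (xj+yj)*(xi+zi) := by
  revert xi xj yi yj zi zj; decide

lemma zh_ne (a : ZMod 2) (h : a ≠ 0) : a = 1 := by revert a; decide

lemma zh_mul_one (a b : ZMod 2) (h : a * b = 1) : b = 1 := by revert a b; decide

lemma zh_recover (a b : ZMod 2) : a + (a + b) = b := by revert a b; decide

/-- counting quadruples with vanishing linear and quadratic patterns -/
lemma count_lemma (n : ℕ) :
    (((univ : Finset ((Vn n × Vn n) × (Vn n × Vn n))).filter (fun q =>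
        (∀ p : PBn n, Qc n q.1.1 p + Qc n q.1.2 p + (Qc n q.2.1 p + Qc n q.2.2 p) = 0)
        ∧ (∀ i, q.1.1 i + q.1.2 i + (q.2.1 i + q.2.2 i) = 0))).card : ℝ)
      ≤ 3 * 2 ^ n * 2 ^ n := by
  classical
  set P : Finset (Vn n × Vn n) :=
    (univ : Finset (Vn n × Vn n)).filter
      (fun de => de.1 = 0 ∨ (de.2 = 0 ∨ de.1 = de.2)) with hP
  have cardV : (univ : Finset (Vn n)).card = 2 ^ n := by
    rw [Finset.card_univ]
    simp [Fintype.card_fun, ZMod.card]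
  -- bound card of P
  have hPcard : (P.card : ℝ) ≤ 3 * 2 ^ n := by
    have h1 : ((univ : Finset (Vn n × Vn n)).filter (fun de => de.1 = 0)).card
        ≤ 2 ^ n := by
      rw [← cardV]
      refine Finset.card_le_card_of_injOn Prod.snd (fun _ _ => mem_univ _) ?_
      intro a ha b hb h
      exact Prod.ext (by rw [(mem_filter.1 ha).2, (mem_filter.1 hb).2]) h
    have h2 : ((univ : Finset (Vn n × Vn n)).filter (fun de => de.2 = 0)).card
        ≤ 2 ^ n := by
      rw [← cardV]
      refine Finset.card_le_card_of_injOn Prod.fst (fun _ _ => mem_univ _) ?_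
      intro a ha b hb h
      exact Prod.ext h (by rw [(mem_filter.1 ha).2, (mem_filter.1 hb).2])
    have h3 : ((univ : Finset (Vn n × Vn n)).filter (fun de => de.1 = de.2)).card
        ≤ 2 ^ n := by
      rw [← cardV]
      refine Finset.card_le_card_of_injOn Prod.fst (fun _ _ => mem_univ _) ?_
      intro a ha b hb h
      exact Prod.ext h (by rw [← (mem_filter.1 ha).2, ← (mem_filter.1 hb).2, h])
    have := Finset.card_union_le
      ((univ : Finset (Vn n × Vn n)).filter (fun de => de.1 = 0))
      (((univ : Finset (Vn n × Vn n)).filter (fun de => de.2 = 0)) ∪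
        ((univ : Finset (Vn n × Vn n)).filter (fun de => de.1 = de.2)))
    have hsub : P ⊆ ((univ : Finset (Vn n × Vn n)).filter (fun de => de.1 = 0))
        ∪ (((univ : Finset (Vn n × Vn n)).filter (fun de => de.2 = 0)) ∪
          ((univ : Finset (Vn n × Vn n)).filter (fun de => de.1 = de.2))) := by
      intro de hde
      rcases (mem_filter.1 hde).2 with h | h | h
      · exact Finset.mem_union_left _ (mem_filter.2 ⟨mem_univ _, h⟩)
      · exact Finset.mem_union_right _
          (Finset.mem_union_left _ (mem_filter.2 ⟨mem_univ _, h⟩))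
      · exact Finset.mem_union_right _
          (Finset.mem_union_right _ (mem_filter.2 ⟨mem_univ _, h⟩))
    have hc : P.card ≤ 3 * 2 ^ n := by
      calc P.card ≤ _ := Finset.card_le_card hsub
        _ ≤ _ := this
        _ ≤ 2 ^ n + (2 ^ n + 2 ^ n) := by
            refine Nat.add_le_add h1 (le_trans (Finset.card_union_le _ _)
              (Nat.add_le_add h2 h3))
        _ = 3 * 2 ^ n := by ring
    exact_mod_cast hc
  -- injection into univ ×ˢ P
  have hinj : (((univ : Finset ((Vn n × Vn n) × (Vn n × Vn n))).filter (fun q =>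
        (∀ p : PBn n, Qc n q.1.1 p + Qc n q.1.2 p + (Qc n q.2.1 p + Qc n q.2.2 p) = 0)
        ∧ (∀ i, q.1.1 i + q.1.2 i + (q.2.1 i + q.2.2 i) = 0))).card)
      ≤ ((univ : Finset (Vn n)) ×ˢ P).card := by
    refine Finset.card_le_card_of_injOn
      (fun q => (q.1.1, (fun i => q.1.1 i + q.1.2 i, fun i => q.1.1 i + q.2.1 i)))
      ?_ ?_
    · -- maps to
      rintro ⟨⟨x, y⟩, ⟨z, w⟩⟩ hq
      obtain ⟨hquad, hlin⟩ := (mem_filter.1 hq).2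
      simp only at hquad hlin
      rw [Finset.mem_coe, Finset.mem_product]
      refine ⟨mem_univ _, mem_filter.2 ⟨mem_univ _, ?_⟩⟩
      -- parallel condition
      set d : Vn n := fun i => x i + y i with hd
      set e : Vn n := fun i => x i + z i with he
      have hw : ∀ i, w i = x i + y i + z i := fun i => zh_w _ _ _ _ (hlin i)
      have hpar : ∀ i j, d i * e j = d j * e i := by
        intro i j
        rcases lt_trichotomy i j with hij | hij | hij
        · have h := hquad ⟨(i, j), hij⟩
          simp only [Qc] at h
          rw [hw i, hw j] at h
          exact zh_quad _ _ _ _ _ _ h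
        · subst hij; ring
        · have h := hquad ⟨(j, i), hij⟩
          simp only [Qc] at h
          rw [hw i, hw j] at h
          have := zh_quad _ _ _ _ _ _ h
          exact this.symm
      by_cases hd0 : d = 0
      · exact Or.inl hd0
      by_cases he0 : e = 0
      · exact Or.inr (Or.inl he0)
      refine Or.inr (Or.inr ?_)
      obtain ⟨i, hi⟩ : ∃ i, d i ≠ 0 := by
        by_contra hcon; push_neg at hcon; exact hd0 (funext hcon)
      obtain ⟨k, hk⟩ : ∃ k, e k ≠ 0 := by
        by_contra hcon; push_neg at hcon; exact he0 (funext hcon)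
      have hdi : d i = 1 := zh_ne _ hi
      have hek : e k = 1 := zh_ne _ hk
      have hei : e i = 1 := by
        have h := hpar i k
        rw [hdi, hek, one_mul] at h
        exact zh_mul_one _ _ h.symm
      funext j
      have h := hpar i j
      rw [hdi, hei, one_mul, mul_one] at h
      exact h.symm
    · -- injective
      rintro ⟨⟨x1, y1⟩, ⟨z1, w1⟩⟩ hq1 ⟨⟨x2, y2⟩, ⟨z2, w2⟩⟩ hq2 h
      obtain ⟨-, hlin1⟩ := (mem_filter.1 hq1).2
      obtain ⟨-, hlin2⟩ := (mem_filter.1 hq2).2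
      simp only at hlin1 hlin2
      simp only [Prod.mk.injEq] at h
      obtain ⟨hx, hd, he⟩ := h
      subst hx
      have hy : y1 = y2 := by
        funext i
        have := congrFun hd i
        calc y1 i = x1 i + (x1 i + y1 i) := (zh_recover _ _).symm
          _ = x1 i + (x1 i + y2 i) := by rw [this]
          _ = y2 i := zh_recover _ _
      have hz : z1 = z2 := by
        funext i
        have := congrFun he i
        calc z1 i = x1 i + (x1 i + z1 i) := (zh_recover _ _).symm
          _ = x1 i + (x1 i + z2 i) := by rw [this]
          _ = z2 i := zh_recover _ _
      subst hy; subst hz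
      have hw : w1 = w2 := by
        funext i
        rw [zh_w _ _ _ _ (hlin1 i), zh_w _ _ _ _ (hlin2 i)]
      rw [hw]
  have hcardprod : (((univ : Finset (Vn n)) ×ˢ P).card : ℝ) ≤ 2 ^ n * (3 * 2 ^ n) := by
    rw [Finset.card_product, cardV]
    push_cast
    exact mul_le_mul_of_nonneg_left hPcard (by positivity)
  calc ((Finset.filter _ univ).card : ℝ) ≤ _ := by exact_mod_cast hinj
    _ ≤ 2 ^ n * (3 * 2 ^ n) := hcardprod
    _ = 3 * 2 ^ n * 2 ^ n := by ring

set_option maxHeartbeats 1000000 in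
/-- Fourth moment bound. -/
lemma moment4 (n : ℕ) (α : PTn n → ZMod 2) :
    (∑ bg : Omn n, (Sf n α bg) ^ 4)
      ≤ 3 * 2 ^ n * 2 ^ n * (Fintype.card (Omn n) : ℝ) := by
  classical
  have hS2 : ∀ bg : Omn n, (Sf n α bg) ^ 2
      = ∑ q : Vn n × Vn n, chi (Fn n α bg q.1 + Fn n α bg q.2) := by
    intro bg
    rw [sq, Sf, Finset.sum_mul_sum, Fintype.sum_prod_type]
    exact Finset.sum_congr rfl fun x _ =>
      Finset.sum_congr rfl fun y _ => (chi_add _ _).symm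
  have hS4 : ∀ bg : Omn n, (Sf n α bg) ^ 4
      = ∑ q : (Vn n × Vn n) × (Vn n × Vn n),
          chi (Fn n α bg q.1.1 + Fn n α bg q.1.2 + (Fn n α bg q.2.1 + Fn n α bg q.2.2)) := by
    intro bg
    have h4 : (Sf n α bg) ^ 4 = ((Sf n α bg) ^ 2) ^ 2 := by ring
    calc (Sf n α bg) ^ 4
        = (∑ p : Vn n × Vn n, chi (Fn n α bg p.1 + Fn n α bg p.2))
          * (∑ r : Vn n × Vn n, chi (Fn n α bg r.1 + Fn n α bg r.2)) := by
          rw [h4, hS2, sq]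
      _ = ∑ p : Vn n × Vn n, ∑ r : Vn n × Vn n,
            chi (Fn n α bg p.1 + Fn n α bg p.2) * chi (Fn n α bg r.1 + Fn n α bg r.2) :=
          Finset.sum_mul_sum _ _ _ _
      _ = ∑ p : Vn n × Vn n, ∑ r : Vn n × Vn n,
            chi (Fn n α bg p.1 + Fn n α bg p.2 + (Fn n α bg r.1 + Fn n α bg r.2)) :=
          Finset.sum_congr rfl fun p _ =>
            Finset.sum_congr rfl fun r _ => (chi_add _ _).symm
      _ = ∑ q : (Vn n × Vn n) × (Vn n × Vn n),
            chi (Fn n α bg q.1.1 + Fn n α bg q.1.2 + (Fn n α bg q.2.1 + Fn n α bg q.2.2)) :=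
          (Fintype.sum_prod_type (fun q : (Vn n × Vn n) × (Vn n × Vn n) =>
            chi (Fn n α bg q.1.1 + Fn n α bg q.1.2
              + (Fn n α bg q.2.1 + Fn n α bg q.2.2)))).symm
  simp only [hS4]
  rw [Finset.sum_comm]
  have inner : ∀ q : (Vn n × Vn n) × (Vn n × Vn n),
      (∑ bg : Omn n,
        chi (Fn n α bg q.1.1 + Fn n α bg q.1.2 + (Fn n α bg q.2.1 + Fn n α bg q.2.2)))
      ≤ if (∀ p : PBn n, Qc n q.1.1 p + Qc n q.1.2 p + (Qc n q.2.1 p + Qc n q.2.2 p) = 0)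
            ∧ (∀ i, q.1.1 i + q.1.2 i + (q.2.1 i + q.2.2 i) = 0)
          then (Fintype.card (Omn n) : ℝ) else 0 := by
    rintro ⟨⟨x, y⟩, ⟨z, w⟩⟩
    have heq : (∑ bg : Omn n,
        chi (Fn n α bg x + Fn n α bg y + (Fn n α bg z + Fn n α bg w)))
        = ∑ bg : Omn n, chi ((cub n α x + cub n α y + (cub n α z + cub n α w))
            + (∑ p, bg.1 p * (Qc n x p + Qc n y p + (Qc n z p + Qc n w p)))
            + (∑ i, bg.2 i * (x i + y i + (z i + w i)))) :=
      Finset.sum_congr rfl fun bg _ => by rw [F_sum4]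
    rw [heq, charsum]
    split
    · exact mul_le_of_le_one_left (by positivity) (chi_le_one _)
    · exact le_refl 0
  calc (∑ q : (Vn n × Vn n) × (Vn n × Vn n), ∑ bg : Omn n, _)
      ≤ ∑ q : (Vn n × Vn n) × (Vn n × Vn n),
          (if (∀ p : PBn n, Qc n q.1.1 p + Qc n q.1.2 p + (Qc n q.2.1 p + Qc n q.2.2 p) = 0)
            ∧ (∀ i, q.1.1 i + q.1.2 i + (q.2.1 i + q.2.2 i) = 0)
          then (Fintype.card (Omn n) : ℝ) else 0) := Finset.sum_le_sum fun q _ => inner q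
    _ = (((univ : Finset ((Vn n × Vn n) × (Vn n × Vn n))).filter (fun q =>
          (∀ p : PBn n, Qc n q.1.1 p + Qc n q.1.2 p + (Qc n q.2.1 p + Qc n q.2.2 p) = 0)
          ∧ (∀ i, q.1.1 i + q.1.2 i + (q.2.1 i + q.2.2 i) = 0))).card : ℝ)
        * (Fintype.card (Omn n) : ℝ) := by
        rw [Finset.sum_ite, Finset.sum_const, Finset.sum_const_zero, add_zero,
          nsmul_eq_mul]
    _ ≤ 3 * 2 ^ n * 2 ^ n * (Fintype.card (Omn n) : ℝ) := by
        exact mul_le_mul_of_nonneg_right (count_lemma n) (by positivity)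

open Finset

set_option maxHeartbeats 2000000 in
/-- Anticoncentration of the gap of a random degree-3 polynomial over `F₂`:
with arbitrary fixed cubic part and uniformly random degree `≤ 2` part,
`Pr[ngap(f)² ≥ 2^{-n-1}] ≥ 1/12`. -/
theorem ngap_anticoncentration (n : ℕ) (hn : 0 < n)
    (α : {t : Fin n × Fin n × Fin n // t.1 < t.2.1 ∧ t.2.1 < t.2.2} → ZMod 2) :
    (1 : ℝ) / 12 ≤
      (((univ : Finset (({p : Fin n × Fin n // p.1 < p.2} → ZMod 2)
            × (Fin n → ZMod 2))).filter (fun bg =>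
          (2 : ℝ) ^ (-(n : ℤ) - 1) ≤
            ((1 / 2 ^ n : ℝ) * ∑ x : Fin n → ZMod 2,
              (if (∑ t : {t : Fin n × Fin n × Fin n // t.1 < t.2.1 ∧ t.2.1 < t.2.2},
                      α t * x t.1.1 * x t.1.2.1 * x t.1.2.2)
                  + (∑ p : {p : Fin n × Fin n // p.1 < p.2},
                      bg.1 p * x p.1.1 * x p.1.2)
                  + (∑ i : Fin n, bg.2 i * x i) = 0 then (1 : ℝ) else -1)) ^ 2)).card : ℝ)
        / (Fintype.card (({p : Fin n × Fin n // p.1 < p.2} → ZMod 2)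
            × (Fin n → ZMod 2)) : ℝ) := by
  classical
  have h2n : (0:ℝ) < 2 ^ n := by positivity
  have hiff : ∀ bg : Omn n,
      ((2 : ℝ) ^ (-(n : ℤ) - 1) ≤ ((1 / 2 ^ n : ℝ) * Sf n α bg) ^ 2)
      ↔ ((2:ℝ) ^ n / 2 ≤ (Sf n α bg) ^ 2) := by
    intro bg
    have hz : (2:ℝ) ^ (-(n:ℤ) - 1) = 1 / (2 ^ n * 2) := by
      rw [zpow_sub₀ (by norm_num : (2:ℝ) ≠ 0), zpow_neg, zpow_natCast, zpow_one]
      ring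
    have hsq : ((1 / 2 ^ n : ℝ) * Sf n α bg) ^ 2
        = (Sf n α bg) ^ 2 / (2 ^ n * 2 ^ n) := by
      ring
    rw [hz, hsq, div_le_div_iff₀ (by positivity) (by positivity),
      div_le_iff₀ (by norm_num : (0:ℝ) < 2)]
    constructor <;> intro h <;> nlinarith [h2n, sq_nonneg (Sf n α bg)]
  change (1:ℝ)/12 ≤ ((univ.filter (fun bg : Omn n =>
      (2:ℝ) ^ (-(n:ℤ) - 1) ≤ ((1 / 2 ^ n : ℝ) * Sf n α bg) ^ 2)).card : ℝ)
      / (Fintype.card (Omn n) : ℝ)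
  rw [Finset.filter_congr (fun bg _ => hiff bg)]
  set A : Finset (Omn n) :=
    univ.filter (fun bg : Omn n => (2:ℝ) ^ n / 2 ≤ (Sf n α bg) ^ 2) with hA
  set C : ℝ := (Fintype.card (Omn n) : ℝ) with hC
  have hC0 : (0:ℝ) < C := by
    rw [hC]; exact_mod_cast Fintype.card_pos
  -- lower bound on sum over A of S²
  have hcompl : ∑ bg ∈ (univ : Finset (Omn n)) \ A, (Sf n α bg) ^ 2
      ≤ (2 ^ n / 2) * C := by
    calc ∑ bg ∈ (univ : Finset (Omn n)) \ A, (Sf n α bg) ^ 2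
        ≤ ∑ _bg ∈ (univ : Finset (Omn n)) \ A, ((2:ℝ) ^ n / 2) := by
          refine Finset.sum_le_sum fun bg hbg => ?_
          have : bg ∉ A := (Finset.mem_sdiff.1 hbg).2
          rw [hA, Finset.mem_filter] at this
          push_neg at this
          exact (this (mem_univ bg)).le
      _ = ((univ : Finset (Omn n)) \ A).card * ((2:ℝ) ^ n / 2) := by
          rw [Finset.sum_const, nsmul_eq_mul]
      _ ≤ C * ((2:ℝ) ^ n / 2) := by
          refine mul_le_mul_of_nonneg_right ?_ (by positivity)
          rw [hC]
          exact_mod_cast Finset.card_le_card (Finset.sdiff_subset)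
            |>.trans_eq (Finset.card_univ)
      _ = (2 ^ n / 2) * C := by ring
  have hsumA : (2 ^ n / 2) * C ≤ ∑ bg ∈ A, (Sf n α bg) ^ 2 := by
    have hsplit : (∑ bg ∈ (univ : Finset (Omn n)) \ A, (Sf n α bg) ^ 2)
        + ∑ bg ∈ A, (Sf n α bg) ^ 2 = ∑ bg : Omn n, (Sf n α bg) ^ 2 :=
      Finset.sum_sdiff (Finset.subset_univ A)
    have := moment2 n α
    rw [← hC] at this
    linarith [hcompl, hsplit.symm ▸ this]
  -- Cauchy–Schwarz
  have hCS : (∑ bg ∈ A, (Sf n α bg) ^ 2) ^ 2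
      ≤ (A.card : ℝ) * ∑ bg ∈ A, (Sf n α bg) ^ 4 := by
    have := Finset.sum_mul_sq_le_sq_mul_sq A (fun _ => (1:ℝ)) (fun bg => (Sf n α bg) ^ 2)
    simp only [one_mul, one_pow] at this
    calc (∑ bg ∈ A, (Sf n α bg) ^ 2) ^ 2
        ≤ (∑ _bg ∈ A, (1:ℝ)) * ∑ bg ∈ A, ((Sf n α bg) ^ 2) ^ 2 := this
      _ = (A.card : ℝ) * ∑ bg ∈ A, (Sf n α bg) ^ 4 := by
          rw [Finset.sum_const, nsmul_eq_mul, mul_one,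
            Finset.sum_congr rfl (fun bg _ =>
              show ((Sf n α bg) ^ 2) ^ 2 = (Sf n α bg) ^ 4 by ring)]
  have hsub4 : ∑ bg ∈ A, (Sf n α bg) ^ 4 ≤ 3 * 2 ^ n * 2 ^ n * C := by
    have hnn : ∀ bg ∈ (univ : Finset (Omn n)), bg ∉ A → (0:ℝ) ≤ (Sf n α bg) ^ 4 :=
      fun bg _ _ => by positivity
    have h1 := Finset.sum_le_sum_of_subset_of_nonneg (Finset.subset_univ A) hnn
    rw [hC]
    exact h1.trans (moment4 n α)
  -- combine
  have hkey : ((2:ℝ) ^ n / 2 * C) ^ 2 ≤ (A.card : ℝ) * (3 * 2 ^ n * 2 ^ n * C) := by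
    have h1 : ((2:ℝ) ^ n / 2 * C) ^ 2 ≤ (∑ bg ∈ A, (Sf n α bg) ^ 2) ^ 2 := by
      apply pow_le_pow_left₀ (by positivity) hsumA
    have h2 : (A.card : ℝ) * ∑ bg ∈ A, (Sf n α bg) ^ 4
        ≤ (A.card : ℝ) * (3 * 2 ^ n * 2 ^ n * C) :=
      mul_le_mul_of_nonneg_left hsub4 (Nat.cast_nonneg _)
    linarith [hCS]
  have hfinal : C ≤ 12 * (A.card : ℝ) := by
    nlinarith [hkey, h2n, hC0, mul_pos (mul_pos h2n h2n) hC0,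
      Nat.cast_nonneg (α := ℝ) A.card]
  rw [le_div_iff₀ hC0]
  linarith [hfinal]
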